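/- Let n ≥ 1 and α ∈ (1/2, 1] with 2α < n. There exists a constant C = C(n, α) > 0 such that for every measurable F : (0,∞)×ℝ^n → [0,∞], every t > 0, and every x ∈ ℝ^n: ∫_0^t ∫_{ℝ^n} (t−s) · F(s,y) · ((t−s)^{1/(2α)} + |x−y|)^{-(n+2α)} dy ds ≤ C ∫_{ℝ^n} (ess sup_{s>0} F(s,y)) · |x−y|^{2α − n} dy, where both sides take values in [0, ∞]. -/

import Mathlib

open MeasureTheory Set
open scoped ENNReal

/-- Euclidean space `ℝ^n`. -/
abbrev Rn (n : ℕ) := EuclideanSpace ℝ (Fin n)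

lemma ker_bound (n : ℕ) (α : ℝ) (hα1 : 1/2 < α) (h2α : 2 * α < n)
    (t : ℝ) (r : ℝ) (hr : 0 < r) :
    (∫⁻ s in Ioc (0:ℝ) t, ENNReal.ofReal (t - s)
        * ENNReal.ofReal (((t - s) ^ (1 / (2 * α)) + r) ^ (-((n:ℝ) + 2 * α))))
      ≤ ENNReal.ofReal (1/2 + 2*α/((n:ℝ) - 2*α)) * ENNReal.ofReal (r ^ (2 * α - (n:ℝ))) := by
  have hβ : (0:ℝ) < 2 * α := by linarith
  set β : ℝ := 2 * α with hβdef
  have hβn : β < (n:ℝ) := h2α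
  set b : ℝ := r ^ β with hbdef
  have hb : 0 < b := Real.rpow_pos_of_pos hr β
  set g : ℝ → ℝ≥0∞ := fun u => ENNReal.ofReal u
      * ENNReal.ofReal ((u ^ (1 / β) + r) ^ (-((n:ℝ) + β))) with hg
  -- substitution u = t - s
  have hsub : (∫⁻ s in Ioc (0:ℝ) t, g (t - s)) = ∫⁻ u in Ico (0:ℝ) t, g u := by
    have := (Measure.measurePreserving_sub_left (volume : Measure ℝ) t).setLIntegral_comp_emb
      (MeasurableEquiv.subLeft t).measurableEmbedding g (Ioc 0 t)
    rw [this, image_const_sub_Ioc, sub_self, sub_zero]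
  rw [show (∫⁻ s in Ioc (0:ℝ) t, ENNReal.ofReal (t - s)
        * ENNReal.ofReal (((t - s) ^ (1 / (2 * α)) + r) ^ (-((n:ℝ) + 2 * α))))
      = ∫⁻ s in Ioc (0:ℝ) t, g (t - s) from rfl, hsub]
  -- pointwise bound
  set h1 : ℝ → ℝ≥0∞ := fun u => ENNReal.ofReal (r ^ (-((n:ℝ) + β))) * ENNReal.ofReal u with hh1
  set h2 : ℝ → ℝ≥0∞ := fun u => ENNReal.ofReal (u ^ (-((n:ℝ)/β))) with hh2
  have hptwise : ∀ u ∈ Ico (0:ℝ) t, g u ≤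
      (Iic b).indicator h1 u + (Ioi b).indicator h2 u := by
    intro u hu
    rcases le_or_gt u b with h1' | h2'
    · refine le_add_right ?_
      rw [indicator_of_mem (mem_Iic.2 h1')]
      show ENNReal.ofReal u * ENNReal.ofReal ((u ^ (1 / β) + r) ^ (-((n:ℝ) + β))) ≤ _
      show _ ≤ ENNReal.ofReal (r ^ (-((n:ℝ) + β))) * ENNReal.ofReal u
      rw [mul_comm (ENNReal.ofReal (r ^ (-((n:ℝ) + β))))]
      refine mul_le_mul_right (ENNReal.ofReal_le_ofReal ?_) _
      exact Real.rpow_le_rpow_of_nonpos hr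
        (le_add_of_nonneg_left (Real.rpow_nonneg hu.1 _)) (by push_cast; linarith)
    · refine le_add_left ?_
      rw [indicator_of_mem (mem_Ioi.2 h2')]
      have hu0 : 0 < u := lt_trans hb h2'
      have key : u * (u ^ (1 / β) + r) ^ (-((n:ℝ) + β)) ≤ u ^ (-((n:ℝ)/β)) := by
        have h3 : (u ^ (1 / β) + r) ^ (-((n:ℝ) + β)) ≤ (u ^ (1/β)) ^ (-((n:ℝ) + β)) :=
          Real.rpow_le_rpow_of_nonpos (Real.rpow_pos_of_pos hu0 _)
            (le_add_of_nonneg_right hr.le) (by push_cast; linarith)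
        have h4 : (u ^ (1/β)) ^ (-((n:ℝ) + β)) = u ^ ((1/β) * (-((n:ℝ) + β))) :=
          (Real.rpow_mul hu0.le _ _).symm
        have h5 : u * u ^ ((1/β) * (-((n:ℝ) + β))) = u ^ (1 + (1/β) * (-((n:ℝ) + β))) := by
          rw [Real.rpow_add hu0, Real.rpow_one]
        have h6 : 1 + (1/β) * (-((n:ℝ) + β)) = -((n:ℝ)/β) := by
          field_simp; ring
        calc u * (u ^ (1 / β) + r) ^ (-((n:ℝ) + β))
            ≤ u * (u ^ (1/β)) ^ (-((n:ℝ) + β)) := mul_le_mul_of_nonneg_left h3 hu0.le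
          _ = u ^ (-((n:ℝ)/β)) := by rw [h4, h5, h6]
      show ENNReal.ofReal u * ENNReal.ofReal ((u ^ (1 / β) + r) ^ (-((n:ℝ) + β))) ≤ _
      rw [← ENNReal.ofReal_mul hu.1]
      exact ENNReal.ofReal_le_ofReal key
  -- integrate the bound
  have hm1 : Measurable ((Iic b).indicator h1) := by
    exact (measurable_const.mul (by fun_prop : Measurable (fun u : ℝ => ENNReal.ofReal u))).indicator measurableSet_Iic
  have hm2 : Measurable ((Ioi b).indicator h2) := by
    exact (by fun_prop : Measurable h2).indicator measurableSet_Ioi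
  have hind1 : (∫⁻ u, (Iic b).indicator h1 u)
      ≤ ENNReal.ofReal (r ^ (-((n:ℝ) + β))) * ENNReal.ofReal (b^2/2) := by
    rw [lintegral_indicator measurableSet_Iic, hh1,
      lintegral_const_mul _ (by fun_prop)]
    refine mul_le_mul_right ?_ _
    calc (∫⁻ u in Iic b, ENNReal.ofReal u)
        = ∫⁻ u in Iic 0 ∪ Ioc 0 b, ENNReal.ofReal u := by
          rw [Iic_union_Ioc_eq_Iic hb.le]
      _ ≤ (∫⁻ u in Iic (0:ℝ), ENNReal.ofReal u) + ∫⁻ u in Ioc (0:ℝ) b, ENNReal.ofReal u :=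
          lintegral_union_le _ _ _
      _ = ∫⁻ u in Ioc (0:ℝ) b, ENNReal.ofReal u := by
          rw [setLIntegral_congr_fun measurableSet_Iic
            (fun u (hu : u ≤ 0) => ENNReal.ofReal_eq_zero.2 hu),
            lintegral_zero, zero_add]
      _ = ENNReal.ofReal (b^2/2) := by
          have hint : IntegrableOn (fun u : ℝ => u) (Ioc (0:ℝ) b) volume :=
            continuous_id'.integrableOn_Ioc
          rw [← ofReal_integral_eq_lintegral_ofReal hint
            (ae_restrict_of_forall_mem measurableSet_Ioc fun x hx => hx.1.le)]
          rw [← intervalIntegral.integral_of_le hb.le, integral_id]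
          norm_num
  have hn1 : -((n:ℝ)/β) < -1 := by
    rw [neg_lt_neg_iff, lt_div_iff₀ hβ]
    linarith
  have hind2 : (∫⁻ u, (Ioi b).indicator h2 u)
      = ENNReal.ofReal (-b ^ (-((n:ℝ)/β) + 1) / (-((n:ℝ)/β) + 1)) := by
    rw [lintegral_indicator measurableSet_Ioi, hh2,
      ← ofReal_integral_eq_lintegral_ofReal
        (integrableOn_Ioi_rpow_of_lt hn1 hb)
        (ae_restrict_of_forall_mem measurableSet_Ioi
          fun x hx => Real.rpow_nonneg (le_of_lt (lt_trans hb hx)) _),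
      integral_Ioi_rpow_of_lt hn1 hb]
  -- combine
  have e1 : r ^ (-((n:ℝ) + β)) * (b^2/2) = r ^ (β - (n:ℝ)) * (1/2) := by
    rw [hbdef, pow_two, ← Real.rpow_add hr, ← mul_div_assoc, ← Real.rpow_add hr,
      show -((n:ℝ) + β) + (β + β) = β - n by ring]
    ring
  have hden : -((n:ℝ)/β) + 1 ≠ 0 := by
    intro h
    have : (n:ℝ)/β = 1 := by linarith
    rw [div_eq_one_iff_eq hβ.ne'] at this
    linarith
  have e2 : -b ^ (-((n:ℝ)/β) + 1) / (-((n:ℝ)/β) + 1) = r ^ (β - (n:ℝ)) * (β/((n:ℝ) - β)) := by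
    rw [hbdef, ← Real.rpow_mul hr.le,
      show β * (-((n:ℝ)/β) + 1) = β - n by field_simp; ring]
    have hscal : (β/((n:ℝ)-β)) * (-((n:ℝ)/β) + 1) = -1 := by
      field_simp [hβ.ne', ne_of_gt (show (0:ℝ) < (n:ℝ)-β by linarith)]
      ring
    rw [div_eq_iff hden, mul_assoc, hscal]
    ring
  calc (∫⁻ u in Ico (0:ℝ) t, g u)
      ≤ ∫⁻ u in Ico (0:ℝ) t, ((Iic b).indicator h1 u + (Ioi b).indicator h2 u) :=
        setLIntegral_mono (hm1.add hm2) hptwise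
    _ ≤ ∫⁻ u, ((Iic b).indicator h1 u + (Ioi b).indicator h2 u) :=
        setLIntegral_le_lintegral _ _
    _ = (∫⁻ u, (Iic b).indicator h1 u) + ∫⁻ u, (Ioi b).indicator h2 u :=
        lintegral_add_left hm1 _
    _ ≤ ENNReal.ofReal (r ^ (-((n:ℝ) + β))) * ENNReal.ofReal (b^2/2)
        + ENNReal.ofReal (-b ^ (-((n:ℝ)/β) + 1) / (-((n:ℝ)/β) + 1)) := by
        rw [hind2]; exact add_le_add_left hind1 _
    _ ≤ ENNReal.ofReal (1/2 + β/((n:ℝ) - β)) * ENNReal.ofReal (r ^ (β - (n:ℝ))) := by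
        rw [← ENNReal.ofReal_mul (Real.rpow_nonneg hr.le _), e1, e2,
          ← ENNReal.ofReal_add
            (mul_nonneg (Real.rpow_nonneg hr.le _) (by norm_num))
            (mul_nonneg (Real.rpow_nonneg hr.le _) (div_nonneg hβ.le (by linarith))),
          ← ENNReal.ofReal_mul (add_nonneg (by norm_num) (div_nonneg hβ.le (by linarith)))]
        exact ENNReal.ofReal_le_ofReal (le_of_eq (by ring))

/-- Control of the space-time kernel integral (γ = 0 kernel decay) by the Riesz potential
of order `2α` of `y ↦ ess sup_{s>0} F(s,y)`. -/
theorem stmt17 (n : ℕ) (hn : 1 ≤ n) (α : ℝ) (hα : 1/2 < α ∧ α ≤ 1) (h2α : 2 * α < n) :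
    ∃ C > (0:ℝ), ∀ F : ℝ → Rn n → ℝ≥0∞, Measurable (Function.uncurry F) →
      ∀ t > (0:ℝ), ∀ x : Rn n,
      (∫⁻ s in Ioc (0:ℝ) t, ∫⁻ y, ENNReal.ofReal (t - s) * F s y
          * ENNReal.ofReal (((t - s) ^ (1 / (2 * α)) + ‖x - y‖) ^ (-((n:ℝ) + 2 * α))))
        ≤ ENNReal.ofReal C * ∫⁻ y,
            essSup (fun s => F s y) (volume.restrict (Ioi (0:ℝ)))
              * ENNReal.ofReal (‖x - y‖ ^ (2 * α - (n:ℝ))) := by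
  obtain ⟨hα1, hα2⟩ := hα
  have hnb : (0:ℝ) < (n:ℝ) - 2*α := by linarith
  refine ⟨1/2 + 2*α/((n:ℝ) - 2*α), by positivity, ?_⟩
  intro F hF t ht x
  haveI : Nonempty (Fin n) := Fin.pos_iff_nonempty.1 hn
  haveI : Nontrivial (Rn n) := inferInstance
  have hxne : ∀ᵐ y : Rn n ∂(volume : Measure (Rn n)), y ≠ x := by
    rw [ae_iff]
    simp
  have hGm : Measurable (Function.uncurry fun s (y : Rn n) =>
      ENNReal.ofReal (t - s) * F s y
        * ENNReal.ofReal (((t - s) ^ (1 / (2 * α)) + ‖x - y‖) ^ (-((n:ℝ) + 2 * α)))) := by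
    have m1 : Measurable fun p : ℝ × Rn n => ENNReal.ofReal (t - p.1) := by fun_prop
    have m3 : Measurable fun p : ℝ × Rn n =>
        ENNReal.ofReal (((t - p.1) ^ (1 / (2 * α)) + ‖x - p.2‖) ^ (-((n:ℝ) + 2 * α))) := by
      fun_prop
    exact (m1.mul hF).mul m3
  calc (∫⁻ s in Ioc (0:ℝ) t, ∫⁻ y, ENNReal.ofReal (t - s) * F s y
          * ENNReal.ofReal (((t - s) ^ (1 / (2 * α)) + ‖x - y‖) ^ (-((n:ℝ) + 2 * α))))
      = ∫⁻ y, ∫⁻ s in Ioc (0:ℝ) t, ENNReal.ofReal (t - s) * F s y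
          * ENNReal.ofReal (((t - s) ^ (1 / (2 * α)) + ‖x - y‖) ^ (-((n:ℝ) + 2 * α))) :=
        lintegral_lintegral_swap hGm.aemeasurable
    _ ≤ ∫⁻ y, ENNReal.ofReal (1/2 + 2*α/((n:ℝ) - 2*α))
          * (essSup (fun s => F s y) (volume.restrict (Ioi (0:ℝ)))
            * ENNReal.ofReal (‖x - y‖ ^ (2 * α - (n:ℝ)))) := by
        refine lintegral_mono_ae ?_
        filter_upwards [hxne] with y hy
        have hr : 0 < ‖x - y‖ := by
          rw [norm_pos_iff, sub_ne_zero]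
          exact fun h => hy h.symm
        have hess : ∀ᵐ s ∂(volume.restrict (Ioc (0:ℝ) t)),
            F s y ≤ essSup (fun s => F s y) (volume.restrict (Ioi (0:ℝ))) := by
          have hle : volume.restrict (Ioc (0:ℝ) t) ≤ volume.restrict (Ioi (0:ℝ)) :=
            Measure.restrict_mono Ioc_subset_Ioi_self le_rfl
          exact ae_mono hle (ENNReal.ae_le_essSup _)
        set E := essSup (fun s => F s y) (volume.restrict (Ioi (0:ℝ))) with hE
        calc (∫⁻ s in Ioc (0:ℝ) t, ENNReal.ofReal (t - s) * F s y
                * ENNReal.ofReal (((t - s) ^ (1 / (2 * α)) + ‖x - y‖) ^ (-((n:ℝ) + 2 * α))))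
            ≤ ∫⁻ s in Ioc (0:ℝ) t, E * (ENNReal.ofReal (t - s)
                * ENNReal.ofReal (((t - s) ^ (1 / (2 * α)) + ‖x - y‖) ^ (-((n:ℝ) + 2 * α)))) := by
              refine lintegral_mono_ae ?_
              filter_upwards [hess] with s hs
              calc ENNReal.ofReal (t - s) * F s y
                    * ENNReal.ofReal (((t - s) ^ (1 / (2 * α)) + ‖x - y‖) ^ (-((n:ℝ) + 2 * α)))
                  = F s y * (ENNReal.ofReal (t - s)
                    * ENNReal.ofReal (((t - s) ^ (1 / (2 * α)) + ‖x - y‖) ^ (-((n:ℝ) + 2 * α)))) := by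
                    ring
                _ ≤ E * (ENNReal.ofReal (t - s)
                    * ENNReal.ofReal (((t - s) ^ (1 / (2 * α)) + ‖x - y‖) ^ (-((n:ℝ) + 2 * α)))) :=
                    mul_le_mul_left hs _
          _ = E * ∫⁻ s in Ioc (0:ℝ) t, ENNReal.ofReal (t - s)
                * ENNReal.ofReal (((t - s) ^ (1 / (2 * α)) + ‖x - y‖) ^ (-((n:ℝ) + 2 * α))) :=
              lintegral_const_mul _ (by fun_prop)
          _ ≤ E * (ENNReal.ofReal (1/2 + 2*α/((n:ℝ) - 2*α))
                * ENNReal.ofReal (‖x - y‖ ^ (2 * α - (n:ℝ)))) :=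
              mul_le_mul_right (ker_bound n α hα1 h2α t _ hr) _
          _ = ENNReal.ofReal (1/2 + 2*α/((n:ℝ) - 2*α))
                * (E * ENNReal.ofReal (‖x - y‖ ^ (2 * α - (n:ℝ)))) := by ring
    _ = ENNReal.ofReal (1/2 + 2*α/((n:ℝ) - 2*α)) * ∫⁻ y,
          essSup (fun s => F s y) (volume.restrict (Ioi (0:ℝ)))
            * ENNReal.ofReal (‖x - y‖ ^ (2 * α - (n:ℝ))) :=
        lintegral_const_mul' _ _ ENNReal.ofReal_ne_top
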